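/- Let Γ be a finite connected cubic G-vertex-transitive graph such that for a vertex v the induced permutation group G_v^{Γ(v)} has order 2, let v' be the unique neighbour of v with G_v = G_{v'}, and let T be the G-orbit of the edge {v,v'} (a perfect matching of Γ). If G has an abelian normal subgroup N with N_v ≠ 1, then every cycle of the graph obtained from Γ by deleting the edges of T has length exactly 4. -/

import Mathlib

/- STATEMENT 8:
Let Γ be a finite connected cubic G-vertex-transitive graph with |G_v^{Γ(v)}| = 2, let
v' be the unique neighbour of v with G_v = G_{v'}, and let T be the G-orbit of the edge
{v,v'} (a perfect matching). If G has an abelian normal subgroup N with N_v ≠ 1, then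
every cycle of Γ − T has length exactly 4. -/

namespace Stmt8

/-- The permutation group induced by the stabiliser `G_v` on the neighbourhood `Γ(v)`,
encoded as the set of restrictions to `Γ(v)` of elements of `G` fixing `v`. -/
def inducedNbhd {V : Type} (Γ : SimpleGraph V) (G : Subgroup (Equiv.Perm V)) (v : V) :
    Set (Γ.neighborSet v → V) :=
  {f | ∃ g ∈ G, (g : Equiv.Perm V) v = v ∧ ∀ u : Γ.neighborSet v, f u = g u.1}

private lemma support_get {V : Type} {Γ : SimpleGraph V} {u v : V} (p : Γ.Walk u v) :
    ∀ i : ℕ, i ≤ p.length → p.support[i]? = some (p.getVert i) := by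
  induction p with
  | nil =>
    intro i hi
    simp only [SimpleGraph.Walk.length_nil, Nat.le_zero] at hi
    subst hi
    simp [SimpleGraph.Walk.support_nil, SimpleGraph.Walk.getVert_zero]
  | cons h q ih =>
    intro i hi
    cases i with
    | zero => simp [SimpleGraph.Walk.support_cons, SimpleGraph.Walk.getVert_zero]
    | succ n =>
      simp only [SimpleGraph.Walk.support_cons, SimpleGraph.Walk.getVert_cons_succ,
        List.getElem?_cons_succ]
      exact ih n (by simpa using hi)

private lemma cycle_getVert_inj {V : Type} {Γ : SimpleGraph V} {w : V} {p : Γ.Walk w w}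
    (hp : p.IsCycle) {i j : ℕ} (hi1 : 1 ≤ i) (hi2 : i ≤ p.length)
    (hj1 : 1 ≤ j) (hj2 : j ≤ p.length) (hij : p.getVert i = p.getVert j) : i = j := by
  have hnd : p.support.tail.Nodup := hp.support_nodup
  have hlen : p.support.length = p.length + 1 := p.length_support
  have hcons : p.support = w :: p.support.tail := p.support_eq_cons
  have htl : p.support.tail.length = p.length := by
    have := congrArg List.length hcons
    simp only [List.length_cons] at this
    omega
  obtain ⟨i', rfl⟩ : ∃ i', i = i' + 1 := ⟨i - 1, by omega⟩
  obtain ⟨j', rfl⟩ : ∃ j', j = j' + 1 := ⟨j - 1, by omega⟩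
  have h1 : p.support.tail[i']? = some (p.getVert (i' + 1)) := by
    have := support_get p (i' + 1) hi2
    rw [hcons, List.getElem?_cons_succ] at this
    exact this
  have h2 : p.support.tail[j']? = some (p.getVert (j' + 1)) := by
    have := support_get p (j' + 1) hj2
    rw [hcons, List.getElem?_cons_succ] at this
    exact this
  have : i' = j' := by
    apply (List.getElem?_inj (l := p.support.tail) (by omega) hnd).mp
    rw [h1, h2, hij]
  omega

private lemma three_elt {V : Type} [Fintype V] {s : Set V} (h3 : s.ncard = 3) {a b c : V}
    (ha : a ∈ s) (hb : b ∈ s) (hc : c ∈ s)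
    (hab : a ≠ b) (hac : a ≠ c) (hbc : b ≠ c) : s = {a, b, c} := by
  have hcard : ({a, b, c} : Set V).ncard = 3 := by
    rw [Set.ncard_insert_of_notMem (by simp [hab, hac]),
      Set.ncard_insert_of_notMem (by simp [hbc]), Set.ncard_singleton]
  exact (Set.eq_of_subset_of_ncard_le
    (by intro x hx; simp only [Set.mem_insert_iff, Set.mem_singleton_iff] at hx
        rcases hx with rfl | rfl | rfl <;> assumption)
    (by rw [h3, hcard]) (Set.toFinite s)).symm

private lemma boundary {V : Type} {Γ : SimpleGraph V} (n : Equiv.Perm V) :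
    ∀ {a b : V}, Γ.Walk a b → n a = a → n b ≠ b →
      ∃ x y, Γ.Adj x y ∧ n x = x ∧ n y ≠ y := by
  intro a b q
  induction q with
  | nil => intro h1 h2; exact absurd h1 h2
  | @cons a c b h q ih =>
    intro h1 h2
    by_cases hc : n c = c
    · exact ih hc h2
    · exact ⟨a, c, h, h1, hc⟩

theorem stmt8 {V : Type} [Fintype V] (Γ : SimpleGraph V)
    (hconn : Γ.Connected)
    (hcubic : ∀ w : V, (Γ.neighborSet w).ncard = 3)
    (G : Subgroup (Equiv.Perm V))
    (hAut : ∀ g ∈ G, ∀ u w : V, Γ.Adj (g u) (g w) ↔ Γ.Adj u w)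
    (hTrans : ∀ u w : V, ∃ g ∈ G, g u = w)
    (v v' : V)
    (hloc : Nat.card ↥(inducedNbhd Γ G v) = 2)
    (hadj : Γ.Adj v v')
    (hstab : ∀ g ∈ G, ((g : Equiv.Perm V) v = v ↔ (g : Equiv.Perm V) v' = v'))
    (N : Subgroup (Equiv.Perm V)) (hNG : N ≤ G)
    (hNnormal : ∀ g ∈ G, ∀ n ∈ N, g * n * g⁻¹ ∈ N)
    (hNab : ∀ a ∈ N, ∀ b ∈ N, a * b = b * a)
    (hNv : ∃ n ∈ N, (n : Equiv.Perm V) v = v ∧ n ≠ 1) :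
    ∀ (w : V)
      (p : (Γ.deleteEdges
        {e : Sym2 V | ∃ g ∈ G, e = Sym2.map (g : Equiv.Perm V) s(v, v')}).Walk w w),
      p.IsCycle → p.length = 4 := by
  set T : Set (Sym2 V) :=
    {e : Sym2 V | ∃ g ∈ G, e = Sym2.map (g : Equiv.Perm V) s(v, v')} with hTdef
  set Δ : SimpleGraph V := Γ.deleteEdges T with hΔdef
  -- G maps edges to edges
  have hadj' : ∀ g ∈ G, ∀ a b : V, Γ.Adj a b → Γ.Adj (g a) (g b) :=
    fun g hg a b h => (hAut g hg a b).mpr h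
  -- T is G-invariant
  have hTinv : ∀ g ∈ G, ∀ e ∈ T, Sym2.map (g : Equiv.Perm V) e ∈ T := by
    rintro g hg e ⟨k, hk, rfl⟩
    refine ⟨g * k, mul_mem hg hk, ?_⟩
    rw [Sym2.map_map]
    rfl
  -- key uniqueness from hstab
  have hKU : ∀ g ∈ G, ∀ k ∈ G, (g : Equiv.Perm V) v = k v → (g : Equiv.Perm V) v' = k v' := by
    intro g hg k hk h
    have hmem : k⁻¹ * g ∈ G := mul_mem (inv_mem hk) hg
    have h1 : (k⁻¹ * g : Equiv.Perm V) v = v := by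
      simp [Equiv.Perm.mul_apply, h]
    have h2 : (k⁻¹ * g : Equiv.Perm V) v' = v' := (hstab _ hmem).mp h1
    have := congrArg k h2
    simpa [Equiv.Perm.mul_apply] using this
  -- an element of G_v moving a neighbour of v
  obtain ⟨gs, hgsG, hgsv, u₀, hu₀, hgsu₀⟩ :
      ∃ gs ∈ G, (gs : Equiv.Perm V) v = v ∧ ∃ u₀, Γ.Adj v u₀ ∧ gs u₀ ≠ u₀ := by
    have h2 : (inducedNbhd Γ G v).Nontrivial := by
      have h := hloc
      rw [Nat.card_eq_two_iff] at h
      obtain ⟨x, y, hxy, -⟩ := h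
      exact Set.nontrivial_coe_sort.mp ⟨⟨x, y, hxy⟩⟩
    obtain ⟨f₁, hf₁, f₂, hf₂, hne⟩ := h2
    obtain ⟨g₁, hg₁, hg₁v, hg₁f⟩ := hf₁
    obtain ⟨g₂, hg₂, hg₂v, hg₂f⟩ := hf₂
    have : ∃ u : Γ.neighborSet v, g₁ u.1 ≠ g₂ u.1 := by
      by_contra hcon
      push_neg at hcon
      exact hne (funext fun u => by rw [hg₁f, hg₂f, hcon])
    obtain ⟨⟨u₀, hu₀⟩, hu⟩ := this
    have h21 : g₁ v = g₂ v := by rw [hg₁v, hg₂v]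
    refine ⟨g₂⁻¹ * g₁, mul_mem (inv_mem hg₂) hg₁,
      by rw [Equiv.Perm.mul_apply, h21]; exact Equiv.symm_apply_apply g₂ v,
      u₀, hu₀, ?_⟩
    intro hcon
    apply hu
    have := congrArg g₂ hcon
    simpa [Equiv.Perm.mul_apply] using this
  -- the element h₀ swapping v and v'
  obtain ⟨h₀, hh₀G, hh₀v⟩ := hTrans v v'
  have hh₀inv : (h₀⁻¹ : Equiv.Perm V) v' = v := by
    rw [← hh₀v]; simp
  -- G_v fixes h₀⁻¹ v
  have hGvfix : ∀ g ∈ G, (g : Equiv.Perm V) v = v → g (h₀⁻¹ v) = h₀⁻¹ v := by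
    intro g hg hgv
    have hg₁G : h₀ * g * h₀⁻¹ ∈ G := mul_mem (mul_mem hh₀G hg) (inv_mem hh₀G)
    have hg₁v' : (h₀ * g * h₀⁻¹ : Equiv.Perm V) v' = v' := by
      simp [Equiv.Perm.mul_apply, hh₀inv, hgv, hh₀v]
    have hg₁v : (h₀ * g * h₀⁻¹ : Equiv.Perm V) v = v := (hstab _ hg₁G).mpr hg₁v'
    have := congrArg (fun x => (h₀⁻¹ : Equiv.Perm V) x) hg₁v
    simpa [Equiv.Perm.mul_apply] using this
  -- h₀ swaps v and v'
  have hσ : (h₀ : Equiv.Perm V) v' = v := by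
    by_contra hz
    set y : V := (h₀⁻¹ : Equiv.Perm V) v with hy
    have hyadj : Γ.Adj v y := by
      have := hadj' h₀⁻¹ (inv_mem hh₀G) v v' hadj
      rw [hh₀inv] at this
      exact this.symm
    have hyne : y ≠ v' := by
      intro h
      apply hz
      rw [← h, hy]
      simp
    have hvu₀ : u₀ ≠ v' := by
      intro h; rw [h] at hgsu₀; exact hgsu₀ ((hstab gs hgsG).mp hgsv)
    have hvy : u₀ ≠ y := by
      intro h; rw [h] at hgsu₀; exact hgsu₀ (hGvfix gs hgsG hgsv)
    have hset : Γ.neighborSet v = {v', y, u₀} :=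
      three_elt (hcubic v) hadj hyadj hu₀ (Ne.symm hyne) (Ne.symm hvu₀) (Ne.symm hvy)
    have hmem : gs u₀ ∈ Γ.neighborSet v := by
      have := hadj' gs hgsG v u₀ hu₀
      rw [hgsv] at this
      exact this
    rw [hset] at hmem
    simp only [Set.mem_insert_iff, Set.mem_singleton_iff] at hmem
    rcases hmem with h | h | h
    · exact hvu₀ (gs.injective (by rw [h, (hstab gs hgsG).mp hgsv]))
    · exact hvy (gs.injective (by rw [h, hGvfix gs hgsG hgsv]))
    · exact hgsu₀ h
  -- every T-edge at x is of the form (g v, g v') with g v = x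
  have hMatch : ∀ x z : V, s(x, z) ∈ T → ∃ g ∈ G, (g : Equiv.Perm V) v = x ∧ g v' = z := by
    rintro x z ⟨g, hg, he⟩
    rw [Sym2.map_pair_eq, Sym2.eq_iff] at he
    rcases he with ⟨hx, hz⟩ | ⟨hx, hz⟩
    · exact ⟨g, hg, hx.symm, hz.symm⟩
    · refine ⟨g * h₀, mul_mem hg hh₀G, ?_, ?_⟩
      · rw [Equiv.Perm.mul_apply, hh₀v]; exact hx.symm
      · rw [Equiv.Perm.mul_apply, hσ]; exact hz.symm
  -- matching uniqueness
  have hMatchU : ∀ x z₁ z₂ : V, s(x, z₁) ∈ T → s(x, z₂) ∈ T → z₁ = z₂ := by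
    intro x z₁ z₂ h1 h2
    obtain ⟨g, hg, hgv, hgv'⟩ := hMatch x z₁ h1
    obtain ⟨k, hk, hkv, hkv'⟩ := hMatch x z₂ h2
    rw [← hgv', ← hkv']
    exact hKU g hg k hk (by rw [hgv, hkv])
  -- every vertex has a T-neighbour
  have hTnbr : ∀ x : V, ∃ x' : V, Γ.Adj x x' ∧ s(x, x') ∈ T := by
    intro x
    obtain ⟨k, hk, hkv⟩ := hTrans v x
    refine ⟨k v', by rw [← hkv]; exact hadj' k hk v v' hadj, ⟨k, hk, ?_⟩⟩
    rw [Sym2.map_pair_eq, hkv]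
  -- elements of G fixing x fix the T-neighbours of x
  have hfixT : ∀ n₂ : Equiv.Perm V, n₂ ∈ G → ∀ x : V, n₂ x = x → ∀ z : V, s(x, z) ∈ T →
      n₂ z = z := by
    intro n₂ hn₂ x hx z hz
    have h1 : s(x, n₂ z) ∈ T := by
      have := hTinv n₂ hn₂ _ hz
      rw [Sym2.map_pair_eq, hx] at this
      exact this
    exact hMatchU x (n₂ z) z h1 hz
  -- every vertex admits an element of N fixing it and moving a neighbour
  have hMove : ∀ x : V, ∃ ν ∈ N, (ν : Equiv.Perm V) x = x ∧ ∃ z, Γ.Adj x z ∧ ν z ≠ z := by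
    obtain ⟨n, hnN, hnv, hn1⟩ := hNv
    have hb : ∃ b, n b ≠ b := by
      by_contra hcon
      push_neg at hcon
      exact hn1 (Equiv.ext hcon)
    obtain ⟨b, hbn⟩ := hb
    obtain ⟨q⟩ := hconn.preconnected v b
    obtain ⟨x₀, z₀, hxz, hx₀, hz₀⟩ := boundary n q hnv hbn
    intro x
    obtain ⟨k, hkG, hkx⟩ := hTrans x₀ x
    refine ⟨k * n * k⁻¹, hNnormal k hkG n hnN, ?_, k z₀, ?_, ?_⟩
    · have hkinv : (k⁻¹ : Equiv.Perm V) x = x₀ := by rw [← hkx]; simp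
      simp [Equiv.Perm.mul_apply, hkinv, hx₀, hkx]
    · rw [← hkx]; exact hadj' k hkG _ _ hxz
    · simp only [Equiv.Perm.mul_apply, Equiv.Perm.coe_inv, Equiv.symm_apply_apply]
      intro hcon
      exact hz₀ (k.injective hcon)
  -- the Δ-neighbourhood structure at a vertex with two distinct Δ-neighbours
  have hNbhd : ∀ x α β : V, Δ.Adj x α → Δ.Adj x β → α ≠ β →
      (∀ c, Δ.Adj x c → c = α ∨ c = β) := by
    intro x α β hα hβ hαβ c hc
    rw [hΔdef, SimpleGraph.deleteEdges_adj] at hα hβ hc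
    obtain ⟨x', hx'adj, hx'T⟩ := hTnbr x
    have hαx' : α ≠ x' := fun h => hα.2 (h ▸ hx'T)
    have hβx' : β ≠ x' := fun h => hβ.2 (h ▸ hx'T)
    have hset : Γ.neighborSet x = {α, β, x'} :=
      three_elt (hcubic x) hα.1 hβ.1 hx'adj hαβ hαx' hβx'
    have : c ∈ Γ.neighborSet x := hc.1
    rw [hset] at this
    simp only [Set.mem_insert_iff, Set.mem_singleton_iff] at this
    rcases this with h | h | h
    · exact Or.inl h
    · exact Or.inr h
    · exact absurd (h ▸ hc.2) (not_not_intro hx'T)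
  -- the swapping element of N at a vertex with two distinct Δ-neighbours
  have hSwap : ∀ x α β : V, Δ.Adj x α → Δ.Adj x β → α ≠ β →
      ∃ ν ∈ N, (ν : Equiv.Perm V) x = x ∧ ν α = β ∧ ν β = α := by
    intro x α β hα hβ hαβ
    obtain ⟨ν, hνN, hνx, z, hzadj, hνz⟩ := hMove x
    have hνG : ν ∈ G := hNG hνN
    obtain ⟨x', hx'adj, hx'T⟩ := hTnbr x
    have hνx' : ν x' = x' := hfixT ν hνG x hνx x' hx'T
    have hzT : ¬ s(x, z) ∈ T := fun h => hνz (hfixT ν hνG x hνx z h)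
    have hzΔ : Δ.Adj x z := by
      rw [hΔdef, SimpleGraph.deleteEdges_adj]; exact ⟨hzadj, hzT⟩
    -- image of a Δ-neighbour of x under ν is a Δ-neighbour of x
    have hνΔ : ∀ c, Δ.Adj x c → Δ.Adj x (ν c) := by
      intro c hc
      rw [hΔdef, SimpleGraph.deleteEdges_adj] at hc ⊢
      constructor
      · have := hadj' ν hνG x c hc.1
        rw [hνx] at this
        exact this
      · intro hmem
        apply hc.2
        have := hTinv ν⁻¹ (inv_mem hνG) _ hmem
        rw [Sym2.map_pair_eq] at this
        have hx1 : (ν⁻¹ : Equiv.Perm V) x = x := by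
          conv_lhs => rw [← hνx]
          exact Equiv.symm_apply_apply ν x
        have hc1 : (ν⁻¹ : Equiv.Perm V) (ν c) = c := by simp
        rw [hx1, hc1] at this
        exact this
    have hz2 : z = α ∨ z = β := hNbhd x α β hα hβ hαβ z hzΔ
    have hνz2 : ν z = α ∨ ν z = β := hNbhd x α β hα hβ hαβ (ν z) (hνΔ z hzΔ)
    have hνα : ν α = α ∨ ν α = β := hNbhd x α β hα hβ hαβ (ν α) (hνΔ α hα)
    have hνβ : ν β = α ∨ ν β = β := hNbhd x α β hα hβ hαβ (ν β) (hνΔ β hβ)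
    refine ⟨ν, hνN, hνx, ?_⟩
    rcases hz2 with h | h
    · -- z = α
      rw [h] at hνz hνz2
      have h1 : ν α = β := hνz2.resolve_left hνz
      have h2 : ν β = α :=
        hνβ.resolve_right (fun hh => absurd (ν.injective (h1.trans hh.symm)) hαβ)
      exact ⟨h1, h2⟩
    · -- z = β
      rw [h] at hνz hνz2
      have h1 : ν β = α := hνz2.resolve_right hνz
      have h2 : ν α = β :=
        hνα.resolve_left (fun hh => absurd (ν.injective (hh.trans h1.symm)) hαβ)
      exact ⟨h2, h1⟩
  -- now the cycle analysis
  intro w p hcyc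
  have hm3 : 3 ≤ p.length := hcyc.three_le_length
  have hw0 : p.getVert 0 = w := p.getVert_zero
  have hwm : p.getVert p.length = w := p.getVert_length
  have A0 : Δ.Adj w (p.getVert 1) := by
    have := p.adj_getVert_succ (i := 0) (by omega)
    rwa [hw0] at this
  have A1 : Δ.Adj (p.getVert 1) (p.getVert 2) := p.adj_getVert_succ (i := 1) (by omega)
  have A2 : Δ.Adj (p.getVert (p.length - 2)) (p.getVert (p.length - 1)) := by
    have := p.adj_getVert_succ (i := p.length - 2) (by omega)
    rwa [show p.length - 2 + 1 = p.length - 1 by omega] at this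
  have A3 : Δ.Adj (p.getVert (p.length - 1)) w := by
    have := p.adj_getVert_succ (i := p.length - 1) (by omega)
    rwa [show p.length - 1 + 1 = p.length by omega, hwm] at this
  have D1 : p.getVert 1 ≠ p.getVert (p.length - 1) := by
    intro h
    have := cycle_getVert_inj hcyc (i := 1) (j := p.length - 1) (by omega) (by omega)
      (by omega) (by omega) h
    omega
  have D2 : w ≠ p.getVert 2 := by
    intro h
    have := cycle_getVert_inj hcyc (i := p.length) (j := 2) (by omega) (by omega) (by omega)
      (by omega) (hwm.trans h)
    omega
  have D3 : p.getVert (p.length - 2) ≠ w := by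
    intro h
    have := cycle_getVert_inj hcyc (i := p.length - 2) (j := p.length) (by omega) (by omega)
      (by omega) (by omega) (h.trans hwm.symm)
    omega
  obtain ⟨n₀, hn₀N, hn₀w, hn₀q1, hn₀r1⟩ :=
    hSwap w (p.getVert 1) (p.getVert (p.length - 1)) A0 A3.symm D1
  obtain ⟨n₁, hn₁N, hn₁q1, hn₁w, hn₁q2⟩ :=
    hSwap (p.getVert 1) w (p.getVert 2) A0.symm A1 D2
  have comm : n₀ * n₁ = n₁ * n₀ := hNab n₀ hn₀N n₁ hn₁N
  have Efix : (n₀ : Equiv.Perm V) (p.getVert 2) = p.getVert 2 := by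
    have := congrArg (fun σ : Equiv.Perm V => σ w) comm
    simp only [Equiv.Perm.mul_apply] at this
    rw [hn₁w, hn₀w, hn₁w] at this
    exact this
  have hn₀G : n₀ ∈ G := hNG hn₀N
  have A4 : Δ.Adj (p.getVert (p.length - 1)) (p.getVert 2) := by
    have hA1 : Γ.Adj (p.getVert 1) (p.getVert 2) ∧ s(p.getVert 1, p.getVert 2) ∉ T :=
      (SimpleGraph.deleteEdges_adj).mp A1
    have h1 : Δ.Adj (n₀ (p.getVert 1)) (n₀ (p.getVert 2)) := by
      refine (SimpleGraph.deleteEdges_adj).mpr ⟨hadj' n₀ hn₀G _ _ hA1.1, ?_⟩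
      intro hmem
      apply hA1.2
      have := hTinv n₀⁻¹ (inv_mem hn₀G) _ hmem
      rw [Sym2.map_pair_eq] at this
      simpa using this
    rwa [hn₀q1, Efix] at h1
  have hfin : p.getVert 2 = p.getVert (p.length - 2) ∨ p.getVert 2 = w :=
    hNbhd (p.getVert (p.length - 1)) (p.getVert (p.length - 2)) w A2.symm A3 D3
      (p.getVert 2) A4
  rcases hfin with h | h
  · have := cycle_getVert_inj hcyc (i := 2) (j := p.length - 2) (by omega) (by omega)
      (by omega) (by omega) h
    omega
  · exact absurd h.symm D2

end Stmt8
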